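/- For every integer n ≥ 2, ∏_{r=1}^{n-1} (sin²(πr/n))^{n-r} = nⁿ / 2^{n(n-1)}. -/

import Mathlib

open Finset Real

lemma abs_one_sub_exp (x : ℝ) (hx : 0 ≤ Real.sin x) :
    ‖1 - Complex.exp ((2 * x : ℝ) * Complex.I)‖ = 2 * Real.sin x := by
  rw [Complex.norm_def, Complex.normSq_apply]
  simp only [Complex.sub_re, Complex.one_re, Complex.exp_ofReal_mul_I_re,
    Complex.sub_im, Complex.one_im, Complex.exp_ofReal_mul_I_im, zero_sub]
  have h1 := Real.sin_sq_add_cos_sq x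
  have h2 := Real.cos_two_mul x
  have h3 := Real.sin_sq_add_cos_sq (2 * x)
  have key : (1 - Real.cos (2 * x)) * (1 - Real.cos (2 * x)) +
      -Real.sin (2 * x) * -Real.sin (2 * x) = (2 * Real.sin x) ^ 2 := by nlinarith
  rw [key, Real.sqrt_sq (by positivity)]

lemma prod_sin_eq (n : ℕ) (hn : 1 ≤ n) :
    ∏ r ∈ Finset.Ico 1 n, Real.sin (π * r / n) = n / 2 ^ (n - 1) := by
  obtain ⟨m, rfl⟩ : ∃ m, n = m + 1 := ⟨n - 1, (Nat.succ_pred_eq_of_pos hn).symm⟩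
  have hμ := Complex.isPrimitiveRoot_exp (m + 1) (Nat.succ_ne_zero m)
  have h := hμ.prod_one_sub_pow_eq_order
  have habs := congrArg norm h
  rw [norm_prod] at habs
  have hne : ((m + 1 : ℕ) : ℂ) ≠ 0 := Nat.cast_ne_zero.mpr (Nat.succ_ne_zero m)
  have key : ∀ k ∈ Finset.range m,
      ‖1 - Complex.exp (2 * (π : ℝ) * Complex.I / ((m + 1 : ℕ) : ℂ)) ^ (k + 1)‖ =
        2 * Real.sin (π * (k + 1) / (m + 1)) := by
    intro k hk
    rw [← Complex.exp_nat_mul]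
    have harg : ((k + 1 : ℕ) : ℂ) * (2 * (π : ℝ) * Complex.I / ((m + 1 : ℕ) : ℂ)) =
        ((2 * (π * (k + 1) / (m + 1)) : ℝ) : ℂ) * Complex.I := by
      push_cast
      have hne' : ((m : ℂ) + 1) ≠ 0 := by push_cast at hne; exact hne
      field_simp
    rw [harg, abs_one_sub_exp]
    apply Real.sin_nonneg_of_nonneg_of_le_pi
    · positivity
    · rw [div_le_iff₀ (by positivity)]
      have hle : (k : ℝ) + 1 ≤ (m : ℝ) + 1 := by
        have := Finset.mem_range.mp hk
        exact_mod_cast Nat.succ_le_succ this.le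
      nlinarith [Real.pi_pos]
  rw [Finset.prod_congr rfl key] at habs
  rw [show ((m : ℂ) + 1) = ((m + 1 : ℕ) : ℂ) by push_cast; ring, Complex.norm_natCast] at habs
  rw [Finset.prod_mul_distrib, Finset.prod_const, Finset.card_range] at habs
  rw [Finset.prod_Ico_eq_prod_range]
  simp only [Nat.add_sub_cancel]
  have hgoal : ∏ k ∈ Finset.range m, Real.sin (π * ↑(1 + k) / ↑(m + 1)) =
      ∏ x ∈ Finset.range m, Real.sin (π * (↑x + 1) / ((m : ℝ) + 1)) := by
    apply Finset.prod_congr rfl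
    intro k _
    push_cast
    ring_nf
  rw [hgoal, eq_div_iff (by positivity), mul_comm, habs]

/-- For every integer `n ≥ 2`,
`∏_{r=1}^{n-1} (sin²(πr/n))^{n-r} = nⁿ / 2^{n(n-1)}`. -/
theorem prod_sin_sq_pow (n : ℕ) (hn : 2 ≤ n) :
    ∏ r ∈ Finset.Ico 1 n, (Real.sin (π * r / n) ^ 2) ^ (n - r) =
      (n : ℝ) ^ n / 2 ^ (n * (n - 1)) := by
  set P := ∏ r ∈ Finset.Ico 1 n, (Real.sin (π * r / n) ^ 2) ^ (n - r) with hP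
  have hn1 : 1 ≤ n := le_trans (by norm_num) hn
  have hsym : P = ∏ r ∈ Finset.Ico 1 n, (Real.sin (π * r / n) ^ 2) ^ r := by
    rw [hP]
    apply Finset.prod_nbij' (fun r => n - r) (fun r => n - r)
    · intro a ha; rw [Finset.mem_Ico] at ha ⊢; omega
    · intro a ha; rw [Finset.mem_Ico] at ha ⊢; omega
    · intro a ha; rw [Finset.mem_Ico] at ha; omega
    · intro a ha; rw [Finset.mem_Ico] at ha; omega
    · intro a ha
      rw [Finset.mem_Ico] at ha
      have hs : Real.sin (π * ↑(n - a) / n) = Real.sin (π * a / n) := by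
        have hcast : ((n - a : ℕ) : ℝ) = n - a := by
          push_cast [Nat.cast_sub ha.2.le]; ring
        rw [hcast]
        have hne : (n : ℝ) ≠ 0 := by positivity
        have harg : π * ((n : ℝ) - a) / n = π - π * a / n := by field_simp
        rw [harg, Real.sin_pi_sub]
      rw [hs]
  have hprod := prod_sin_eq n hn1
  have h1 : P ^ 2 = (∏ r ∈ Finset.Ico 1 n, Real.sin (π * r / n)) ^ (2 * n) := by
    rw [pow_two]
    nth_rewrite 2 [hsym]
    rw [hP, ← Finset.prod_mul_distrib, ← Finset.prod_pow]
    apply Finset.prod_congr rfl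
    intro r hr
    rw [Finset.mem_Ico] at hr
    rw [← pow_add, ← pow_mul]
    congr 1
    omega
  have hsq : P ^ 2 = ((n : ℝ) ^ n / 2 ^ (n * (n - 1))) ^ 2 := by
    have e1 : ((n : ℝ)) ^ (2 * n) = ((n : ℝ) ^ n) ^ 2 := by
      rw [← pow_mul]; congr 1; ring
    have e2 : ((2 : ℝ) ^ (n - 1)) ^ (2 * n) = ((2 : ℝ) ^ (n * (n - 1))) ^ 2 := by
      rw [← pow_mul, ← pow_mul]; congr 1; ring
    rw [h1, hprod, div_pow, e1, e2, div_pow]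
  have hPnn : 0 ≤ P := Finset.prod_nonneg fun r _ => by positivity
  have hRnn : (0 : ℝ) ≤ (n : ℝ) ^ n / 2 ^ (n * (n - 1)) := by positivity
  nlinarith [hsq, hPnn, hRnn]
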